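/- Let L₃ = {(a²b)ᵐ·(ab²)ⁿ·(a²b)² : m ≥ 3, n ≥ 1} over the alphabet {a, b}. For every word w ∈ L₃ and all (possibly empty) words p, q over {a, b}: p·w·q ∈ L₃ if and only if p = (a²b)ⁱ for some i ≥ 0 and q is the empty word. -/
import Mathlib


/-- The two-letter alphabet `{a, b}`. -/
inductive AB : Type
  | a : AB
  | b : AB

/-- Words over `{a, b}`, as elements of the free monoid (the empty word is `1`). -/
abbrev Word : Type := FreeMonoid AB

/-- The letter `a` as a word. -/
def wa : Word := FreeMonoid.of AB.a

/-- The letter `b` as a word. -/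
def wb : Word := FreeMonoid.of AB.b

/-- encode a gap list as a word -/
def Eb (l : List ℕ) : Word := (l.map (fun g => wa ^ g * wb)).prod

lemma Eb_nil : Eb [] = 1 := rfl
lemma Eb_cons (g : ℕ) (r : List ℕ) : Eb (g :: r) = wa ^ g * wb * Eb r := by
  simp [Eb]
lemma Eb_append (l₁ l₂ : List ℕ) : Eb (l₁ ++ l₂) = Eb l₁ * Eb l₂ := by
  simp [Eb]

/-- decode a letter list into (gap list, trailing a-count) -/
def D : List AB → List ℕ × ℕ
  | [] => ([], 0)
  | AB.b :: t => ((0 : ℕ) :: (D t).1, (D t).2)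
  | AB.a :: t =>
    match D t with
    | ([], j) => ([], j + 1)
    | (g :: r, j) => ((g + 1) :: r, j)

lemma Recon : ∀ s : List AB, FreeMonoid.ofList s = Eb (D s).1 * wa ^ (D s).2
  | [] => by simp [D, Eb_nil]
  | AB.b :: t => by
      have ih := Recon t
      have h1 : FreeMonoid.ofList (AB.b :: t) = wb * FreeMonoid.ofList t := rfl
      rw [h1, ih]
      simp [D, Eb_cons, mul_assoc]
  | AB.a :: t => by
      have ih := Recon t
      have h1 : FreeMonoid.ofList (AB.a :: t) = wa * FreeMonoid.ofList t := rfl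
      rw [h1, ih]
      rcases hD : D t with ⟨l, j⟩
      rcases l with _ | ⟨g, r⟩
      · simp [D, hD, Eb_nil, pow_succ']
      · simp only [D, hD, Eb_cons]
        rw [← mul_assoc, ← mul_assoc, ← mul_assoc, ← pow_succ']

lemma toList_wa_pow (t : ℕ) : FreeMonoid.toList (wa ^ t) = List.replicate t AB.a := by
  induction t with
  | zero => rfl
  | succ t ih =>
      rw [pow_succ', FreeMonoid.toList_mul, ih]
      rfl

lemma D_replicate_a (t : ℕ) : D (List.replicate t AB.a) = ([], t) := by
  induction t with
  | zero => rfl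
  | succ t ih => rw [List.replicate_succ]; simp [D, ih]

lemma D_a_prepend (g : ℕ) (s : List AB) (h : ℕ) (r : List ℕ) (t : ℕ)
    (hs : D s = (h :: r, t)) :
    D (List.replicate g AB.a ++ s) = ((h + g) :: r, t) := by
  induction g with
  | zero => simpa using hs
  | succ g ih =>
      rw [List.replicate_succ, List.cons_append]
      simp only [D, ih]
      exact congrArg (fun x => ((x :: r), t)) (by omega)

lemma Dspec : ∀ (l : List ℕ) (t : ℕ), D (FreeMonoid.toList (Eb l * wa ^ t)) = (l, t)
  | [], t => by rw [Eb_nil, one_mul, toList_wa_pow]; exact D_replicate_a t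
  | g :: r, t => by
      have ih := Dspec r t
      have : Eb (g :: r) * wa ^ t = wa ^ g * (wb * (Eb r * wa ^ t)) := by
        rw [Eb_cons]; group
      rw [this]
      have h1 : FreeMonoid.toList (wa ^ g * (wb * (Eb r * wa ^ t))) =
          List.replicate g AB.a ++ (AB.b :: FreeMonoid.toList (Eb r * wa ^ t)) := by
        rw [FreeMonoid.toList_mul, toList_wa_pow]; rfl
      rw [h1]
      have hb : D (AB.b :: FreeMonoid.toList (Eb r * wa ^ t)) = (0 :: r, t) := by
        simp only [D, ih]
      rw [D_a_prepend g _ 0 r t hb, Nat.zero_add]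

lemma Eb_inj (l₁ l₂ : List ℕ) (t₁ t₂ : ℕ) (h : Eb l₁ * wa ^ t₁ = Eb l₂ * wa ^ t₂) :
    l₁ = l₂ ∧ t₁ = t₂ := by
  have := Dspec l₁ t₁
  rw [h, Dspec l₂ t₂] at this
  exact ⟨(congrArg Prod.fst this).symm, (congrArg Prod.snd this).symm⟩

/-- gap list of `(ab²)ⁿ` -/
def Jl (n : ℕ) : List ℕ := (List.replicate n [1, 0]).flatten

lemma Jl_zero : Jl 0 = [] := rfl
lemma Jl_succ (n : ℕ) : Jl (n + 1) = [1, 0] ++ Jl n := by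
  simp [Jl, List.replicate_succ]
lemma Jl_succ' (n : ℕ) : Jl (n + 1) = Jl n ++ [1, 0] := by
  simp [Jl, List.replicate_succ']

lemma Eb_replicate (m : ℕ) : Eb (List.replicate m 2) = (wa ^ 2 * wb) ^ m := by
  induction m with
  | zero => rfl
  | succ m ih => rw [List.replicate_succ, Eb_cons, ih, ← pow_succ']

lemma Eb_Jl (n : ℕ) : Eb (Jl n) = (wa * wb ^ 2) ^ n := by
  induction n with
  | zero => rfl
  | succ n ih =>
      have h10 : Eb [1, 0] = wa * wb ^ 2 := by
        rw [show Eb [1, 0] = wa ^ 1 * wb * (wa ^ 0 * wb * 1) from rfl]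
        rw [pow_one, pow_zero, one_mul, mul_one, sq, mul_assoc]
      rw [Jl_succ, Eb_append, ih, h10, ← pow_succ']

/-- the canonical gap list of a member of L3 -/
lemma Eb_L3 (m n : ℕ) :
    Eb (List.replicate m 2 ++ Jl n ++ [2, 2]) =
      (wa ^ 2 * wb) ^ m * (wa * wb ^ 2) ^ n * (wa ^ 2 * wb) ^ 2 := by
  have h22 : Eb [2, 2] = (wa ^ 2 * wb) ^ 2 := by
    rw [show Eb [2, 2] = wa ^ 2 * wb * (wa ^ 2 * wb * 1) from rfl, mul_one]
    exact (sq _).symm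
  rw [Eb_append, Eb_append, Eb_replicate, Eb_Jl, h22]

lemma suffix_key : ∀ (N : ℕ) (lq : List ℕ),
    (1 :: 0 :: 2 :: 2 :: lq) <:+ (Jl N ++ [2, 2]) → lq = [] := by
  intro N
  induction N with
  | zero =>
      intro lq h
      have := h.length_le
      simp [Jl_zero] at this
  | succ N ih =>
      intro lq h
      rw [Jl_succ] at h
      simp only [List.cons_append, List.nil_append] at h
      rcases List.suffix_cons_iff.1 h with h1 | h2
      · -- 1::0::2::2::lq = 1 :: 0 :: (Jl N ++ [2,2])
        have h1' : (2 : ℕ) :: 2 :: lq = Jl N ++ [2, 2] := by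
          have := congrArg (fun l => l.tail.tail) h1
          simpa using this
        cases N with
        | zero => simpa [Jl_zero] using h1'
        | succ N' =>
            rw [Jl_succ] at h1'
            simp only [List.cons_append, List.nil_append, List.cons.injEq] at h1'
            omega
      · rcases List.suffix_cons_iff.1 h2 with h3 | h4
        · simp only [List.cons.injEq] at h3; omega
        · exact ih lq h4

lemma suffix_full : ∀ (M N : ℕ) (lq : List ℕ),
    (1 :: 0 :: 2 :: 2 :: lq) <:+ (List.replicate M 2 ++ Jl N ++ [2, 2]) → lq = [] := by
  intro M
  induction M with
  | zero => intro N lq h; exact suffix_key N lq (by simpa using h)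
  | succ M ih =>
      intro N lq h
      rw [List.replicate_succ] at h
      simp only [List.cons_append] at h
      rcases List.suffix_cons_iff.1 h with h1 | h2
      · simp only [List.cons.injEq] at h1; omega
      · exact ih N lq (by simpa using h2)

lemma strip (A B A' B' : List ℕ) (hA : A = A' ++ [2]) (hB : B = B' ++ [2]) :
    ∀ k K, A ++ Jl k = B ++ Jl K → k = K ∧ A = B := by
  intro k
  induction k with
  | zero =>
      intro K h
      cases K with
      | zero => exact ⟨rfl, by simpa [Jl_zero] using h⟩
      | succ K' =>
          exfalso
          rw [Jl_zero, List.append_nil, Jl_succ', hA] at h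
          have h2 : (A' ++ [2]) = ((B ++ Jl K' ++ [1]) ++ [0]) := by
            rw [h]; simp [List.append_assoc]
          have := (List.append_inj' h2 (by simp)).2
          simp at this
  | succ k ih =>
      intro K h
      cases K with
      | zero =>
          exfalso
          rw [Jl_zero, List.append_nil, Jl_succ', hB] at h
          have h2 : ((A ++ Jl k ++ [1]) ++ [0]) = (B' ++ [2]) := by
            rw [← h]; simp [List.append_assoc]
          have := (List.append_inj' h2 (by simp)).2
          simp at this
      | succ K' =>
          rw [Jl_succ', Jl_succ'] at h
          have h2 : (A ++ Jl k) ++ [1, 0] = (B ++ Jl K') ++ [1, 0] := by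
            rw [← List.append_assoc, ← List.append_assoc] at h; exact h
          have h3 := (List.append_inj' h2 rfl).1
          obtain ⟨hk, hAB⟩ := ih K' h3
          exact ⟨by omega, hAB⟩

lemma shift (j g : ℕ) (r : List ℕ) : wa ^ j * Eb (g :: r) = Eb ((j + g) :: r) := by
  rw [Eb_cons, Eb_cons, ← mul_assoc, ← mul_assoc, ← pow_add]


/-- Syntactic equivalence of `u` and `v` with respect to the language `L`:
for all (possibly empty) words `p, q`, `p·u·q ∈ L ↔ p·v·q ∈ L`. -/
def SynEq (L : Set Word) (u v : Word) : Prop :=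
  ∀ p q : Word, p * u * q ∈ L ↔ p * v * q ∈ L

/-- The language `L₃ = (a²b)²(a²b)⁺(ab²)⁺(a²b)² = {(a²b)ᵐ·(ab²)ⁿ·(a²b)² : m ≥ 3, n ≥ 1}`. -/
def L3 : Set Word :=
  {w | ∃ m n : ℕ, 3 ≤ m ∧ 1 ≤ n ∧
    w = (wa ^ 2 * wb) ^ m * (wa * wb ^ 2) ^ n * (wa ^ 2 * wb) ^ 2}

/-- for `w ∈ L₃` and all (possibly empty) words `p, q`,
`p·w·q ∈ L₃` iff `p = (a²b)ⁱ` for some `i ≥ 0` and `q` is the empty word. -/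
theorem contexts_of_L3 (w : Word) (hw : w ∈ L3) (p q : Word) :
    p * w * q ∈ L3 ↔ (∃ i : ℕ, p = (wa ^ 2 * wb) ^ i) ∧ q = 1 := by
  obtain ⟨m, n, hm, hn, hweq⟩ := hw
  constructor
  · intro h
    obtain ⟨M, N, hM, hN, hEq⟩ := h
    obtain ⟨m₀, rfl⟩ : ∃ m₀, m = m₀ + 3 := ⟨m - 3, by omega⟩
    obtain ⟨n₀, rfl⟩ : ∃ n₀, n = n₀ + 1 := ⟨n - 1, by omega⟩
    obtain ⟨M₀, rfl⟩ : ∃ M₀, M = M₀ + 3 := ⟨M - 3, by omega⟩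
    obtain ⟨N₀, rfl⟩ : ∃ N₀, N = N₀ + 1 := ⟨N - 1, by omega⟩
    obtain ⟨lp, jp, hp⟩ : ∃ lp jp, p = Eb lp * wa ^ jp :=
      ⟨_, _, Recon (FreeMonoid.toList p)⟩
    obtain ⟨lq, tq, hq⟩ : ∃ lq tq, q = Eb lq * wa ^ tq :=
      ⟨_, _, Recon (FreeMonoid.toList q)⟩
    have hw2 : w = Eb (2 :: (List.replicate (m₀ + 2) 2 ++ Jl (n₀ + 1) ++ [2, 2])) := by
      rw [hweq, ← Eb_L3]
      congr 1
    have key : p * w * q =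
        Eb (lp ++ ((jp + 2) :: (List.replicate (m₀ + 2) 2 ++ Jl (n₀ + 1) ++ [2, 2])) ++ lq)
          * wa ^ tq := by
      rw [hp, hq, hw2, Eb_append, Eb_append, ← shift]
      simp only [mul_assoc]
    have hrhs : (wa ^ 2 * wb) ^ (M₀ + 3) * (wa * wb ^ 2) ^ (N₀ + 1) * (wa ^ 2 * wb) ^ 2
        = Eb (List.replicate (M₀ + 3) 2 ++ Jl (N₀ + 1) ++ [2, 2]) * wa ^ 0 := by
      rw [Eb_L3, pow_zero, mul_one]
    rw [key, hrhs] at hEq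
    obtain ⟨hlist, htq⟩ := Eb_inj _ _ _ _ hEq
    have hlq : lq = [] := by
      apply suffix_full (M₀ + 3) (N₀ + 1) lq
      refine ⟨lp ++ (jp + 2) :: (List.replicate (m₀ + 2) 2 ++ Jl n₀), ?_⟩
      rw [← hlist]
      simp [Jl_succ', List.append_assoc]
    subst hlq
    simp only [List.append_nil] at hlist
    have h5 : (lp ++ [jp + 2] ++ List.replicate (m₀ + 2) 2 ++ Jl (n₀ + 1)) ++ [2, 2]
        = (List.replicate (M₀ + 3) 2 ++ Jl (N₀ + 1)) ++ [2, 2] := by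
      simp only [List.append_assoc, List.cons_append, List.singleton_append,
        List.nil_append] at hlist ⊢
      exact hlist
    have h6 := (List.append_inj' h5 rfl).1
    have h7 := strip (lp ++ [jp + 2] ++ List.replicate (m₀ + 2) 2)
        (List.replicate (M₀ + 3) 2)
        (lp ++ [jp + 2] ++ List.replicate (m₀ + 1) 2) (List.replicate (M₀ + 2) 2)
        (by simp [List.replicate_succ', List.append_assoc])
        (by simp [List.replicate_succ'])
        (n₀ + 1) (N₀ + 1) h6
    have hAB := h7.2
    have hjp : jp = 0 := by
      have hmem : (jp + 2) ∈ List.replicate (M₀ + 3) 2 := by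
        rw [← hAB]; simp
      have := List.eq_of_mem_replicate hmem
      omega
    have hlp2 : ∀ x ∈ lp, x = 2 := by
      intro x hx
      have hmem : x ∈ List.replicate (M₀ + 3) 2 := by
        rw [← hAB]; simp [hx]
      exact List.eq_of_mem_replicate hmem
    obtain ⟨i, hi⟩ : ∃ i, lp = List.replicate i 2 :=
      ⟨lp.length, List.eq_replicate_length.mpr hlp2⟩
    refine ⟨⟨i, ?_⟩, ?_⟩
    · rw [hp, hjp, pow_zero, mul_one, hi]
      exact Eb_replicate i
    · rw [hq, htq, pow_zero, mul_one, Eb_nil]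
  · rintro ⟨⟨i, rfl⟩, rfl⟩
    refine ⟨i + m, n, by omega, hn, ?_⟩
    rw [mul_one, hweq]
    simp only [← mul_assoc]
    rw [← pow_add]
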